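/- Fix C ≥ 0, m ∈ ℕ, weights b_1,…,b_m ∈ ℝ with Σ_{k=1}^m b_k = 1 and Σ_{k=1}^m b_k c_k = 1/2, and nodes c_1,…,c_m ∈ [0,1]. There is a constant K, depending only on C and the weights, such that for every real Banach space E, every τ with 0 < τ ≤ 1, and every function ψ : [0,τ] → E that is continuous on [0,τ], twice continuously differentiable on [0,τ), and satisfies ‖ψ″(v)‖ ≤ C (1 + 1/(τ − v)) for all v ∈ [0,τ), one has ‖∫₀^τ ψ(s) ds − τ Σ_{k=1}^m b_k ψ(τ c_k)‖ ≤ K τ². -/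

import Mathlib

open Set MeasureTheory intervalIntegral

lemma norm_sub_le_integral_bound' {E : Type*} [NormedAddCommGroup E] [NormedSpace ℝ E]
    [CompleteSpace E]
    {f f' : ℝ → E} {g : ℝ → ℝ} {a b : ℝ} (hab : a ≤ b)
    (hf : ContinuousOn f (Set.Icc a b))
    (hd : ∀ t ∈ Set.Ioo a b, HasDerivAt f (f' t) t)
    (hi : IntervalIntegrable f' volume a b)
    (hg : IntervalIntegrable g volume a b)
    (hle : ∀ t ∈ Set.Ioo a b, ‖f' t‖ ≤ g t) :
    ‖f b - f a‖ ≤ ∫ t in a..b, g t := by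
  rw [← integral_eq_sub_of_hasDeriv_right_of_le hab hf
      (fun x hx => (hd x hx).hasDerivWithinAt) hi]
  have h2 : ∀ᵐ (t : ℝ), t ≠ b := by
    rw [ae_iff]
    have : {t : ℝ | ¬ t ≠ b} = {b} := by ext t; simp
    rw [this]; exact Real.volume_singleton
  have hae : ∀ᵐ t ∂(volume.restrict (Set.uIoc a b)), ‖f' t‖ ≤ g t := by
    rw [uIoc_of_le hab]
    filter_upwards [ae_restrict_mem measurableSet_Ioc, ae_restrict_of_ae h2] with t ht hne
    exact hle t ⟨ht.1, lt_of_le_of_ne ht.2 hne⟩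
  refine intervalIntegral.norm_integral_le_of_norm_le hab ?_ hg
  rw [uIoc_of_le hab] at hae
  exact (ae_restrict_iff' measurableSet_Ioc).1 hae

lemma integral_one_div_tau_sub' {τ v : ℝ} (h0 : 0 ≤ v) (hv : v < τ) :
    ∫ u in (0:ℝ)..v, 1 / (τ - u) = Real.log τ - Real.log (τ - v) := by
  have hderiv : ∀ u ∈ Set.uIcc (0:ℝ) v, HasDerivAt (fun u => -Real.log (τ - u)) (1 / (τ - u)) u := by
    intro u hu
    rw [uIcc_of_le h0] at hu
    have hne : τ - u ≠ 0 := sub_ne_zero.2 (ne_of_gt (lt_of_le_of_lt hu.2 hv))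
    have h1 : HasDerivAt (fun u : ℝ => τ - u) (-1) u := (hasDerivAt_id u).const_sub τ
    have h2 := (Real.hasDerivAt_log hne).comp u h1
    have h3 := h2.neg
    exact h3.congr_deriv (by ring)
  have hint : IntervalIntegrable (fun u => 1 / (τ - u)) volume 0 v := by
    apply ContinuousOn.intervalIntegrable
    rw [uIcc_of_le h0]
    intro x hx
    have hne : τ - x ≠ 0 := sub_ne_zero.2 (ne_of_gt (lt_of_le_of_lt hx.2 hv))
    exact (continuousAt_const.div (by fun_prop) hne).continuousWithinAt
  rw [intervalIntegral.integral_eq_sub_of_hasDerivAt hderiv hint]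
  simp
  ring

lemma integral_log_tau_sub' {τ v : ℝ} (h0 : 0 ≤ v) (hv : v < τ) :
    ∫ s in (0:ℝ)..v, Real.log (τ - s) = -(τ - v) * Real.log (τ - v) - v + τ * Real.log τ := by
  have hderiv : ∀ s ∈ Set.uIcc (0:ℝ) v,
      HasDerivAt (fun s => -(τ - s) * Real.log (τ - s) - s) (Real.log (τ - s)) s := by
    intro s hs
    rw [uIcc_of_le h0] at hs
    have hpos : 0 < τ - s := sub_pos.2 (lt_of_le_of_lt hs.2 hv)
    have hne : τ - s ≠ 0 := ne_of_gt hpos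
    have h1 : HasDerivAt (fun s : ℝ => τ - s) (-1) s := (hasDerivAt_id s).const_sub τ
    have h2 : HasDerivAt (fun s : ℝ => Real.log (τ - s)) ((τ - s)⁻¹ * -1) s :=
      (Real.hasDerivAt_log hne).comp s h1
    have h3 : HasDerivAt (fun s : ℝ => -(τ - s) * Real.log (τ - s))
        (-(-1) * Real.log (τ - s) + -(τ - s) * ((τ - s)⁻¹ * -1)) s := (h1.neg.mul h2)
    have h4 := h3.sub (hasDerivAt_id s)
    have hx : (τ - s) * (τ - s)⁻¹ = 1 := mul_inv_cancel₀ hne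
    exact h4.congr_deriv (by linear_combination hx)
  have hint : IntervalIntegrable (fun s => Real.log (τ - s)) volume 0 v := by
    apply ContinuousOn.intervalIntegrable
    rw [uIcc_of_le h0]
    intro x hx
    have hne : τ - x ≠ 0 := sub_ne_zero.2 (ne_of_gt (lt_of_le_of_lt hx.2 hv))
    exact ((Real.continuousAt_log hne).comp (by fun_prop)).continuousWithinAt
  rw [intervalIntegral.integral_eq_sub_of_hasDerivAt hderiv hint]
  simp



/- STATEMENT 8: a second-order quadrature formula has error O(τ²) under the
   singular second-derivative bound ‖ψ″(v)‖ ≤ C(1 + 1/(τ − v)). -/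
theorem second_order_quadrature_tau_sq
    (C : ℝ) (hC : 0 ≤ C)
    (m : ℕ) (b c : Fin m → ℝ)
    (hb1 : ∑ k, b k = 1) (hb2 : ∑ k, b k * c k = 1 / 2)
    (hc : ∀ k, c k ∈ Set.Icc (0:ℝ) 1) :
    ∃ K : ℝ,
      ∀ (E : Type*) [NormedAddCommGroup E] [NormedSpace ℝ E] [CompleteSpace E]
        (τ : ℝ), 0 < τ → τ ≤ 1 →
      ∀ (ψ ψ' ψ'' : ℝ → E),
      ContinuousOn ψ (Set.Icc (0:ℝ) τ) →
      (∀ v ∈ Set.Ico (0:ℝ) τ, HasDerivWithinAt ψ (ψ' v) (Set.Ico (0:ℝ) τ) v) →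
      (∀ v ∈ Set.Ico (0:ℝ) τ, HasDerivWithinAt ψ' (ψ'' v) (Set.Ico (0:ℝ) τ) v) →
      ContinuousOn ψ' (Set.Ico (0:ℝ) τ) →
      ContinuousOn ψ'' (Set.Ico (0:ℝ) τ) →
      (∀ v ∈ Set.Ico (0:ℝ) τ, ‖ψ'' v‖ ≤ C * (1 + 1 / (τ - v))) →
      ‖(∫ s in (0:ℝ)..τ, ψ s) - τ • ∑ k, b k • ψ (τ * c k)‖ ≤ K * τ ^ 2 := by
  
  refine ⟨3/2 * C * (1 + ∑ k, |b k|), ?_⟩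
  intro E _ _ _ τ hτ hτ1 ψ ψ' ψ'' hψc hdψ hdψ' hψ'c hψ''c hbound
  have hτ0 : (0:ℝ) ≤ τ := hτ.le
  have hmem : ∀ t ∈ Set.Ioo (0:ℝ) τ, Set.Ico (0:ℝ) τ ∈ nhds t := fun t ht =>
    mem_nhds_iff.2 ⟨Set.Ioo 0 τ, Set.Ioo_subset_Ico_self, isOpen_Ioo, ht⟩
  have hψd : ∀ t ∈ Set.Ioo (0:ℝ) τ, HasDerivAt ψ (ψ' t) t := fun t ht =>
    (hdψ t (Set.Ioo_subset_Ico_self ht)).hasDerivAt (hmem t ht)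
  have hψ'd : ∀ t ∈ Set.Ioo (0:ℝ) τ, HasDerivAt ψ' (ψ'' t) t := fun t ht =>
    (hdψ' t (Set.Ioo_subset_Ico_self ht)).hasDerivAt (hmem t ht)
  -- Step 1: bound on ψ' s - ψ' 0
  have hstep1 : ∀ s ∈ Set.Ico (0:ℝ) τ,
      ‖ψ' s - ψ' 0‖ ≤ C * (s + (Real.log τ - Real.log (τ - s))) := by
    intro s hs
    have hsub : Set.Icc (0:ℝ) s ⊆ Set.Ico 0 τ := fun x hx => ⟨hx.1, lt_of_le_of_lt hx.2 hs.2⟩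
    have hgc : ContinuousOn (fun u => C * (1 + 1 / (τ - u))) (Set.Icc 0 s) := by
      intro x hx
      have hne : τ - x ≠ 0 := sub_ne_zero.2 (ne_of_gt (lt_of_le_of_lt hx.2 hs.2))
      exact (continuousAt_const.mul (continuousAt_const.add
        (continuousAt_const.div (by fun_prop) hne))).continuousWithinAt
    have hintone : IntervalIntegrable (fun u => 1 / (τ - u)) volume 0 s := by
      apply ContinuousOn.intervalIntegrable_of_Icc hs.1
      intro x hx
      have hne : τ - x ≠ 0 := sub_ne_zero.2 (ne_of_gt (lt_of_le_of_lt hx.2 hs.2))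
      exact (continuousAt_const.div (by fun_prop) hne).continuousWithinAt
    have h := norm_sub_le_integral_bound' hs.1 (hψ'c.mono hsub)
      (fun t ht => hψ'd t ⟨ht.1, lt_trans ht.2 hs.2⟩)
      ((hψ''c.mono hsub).intervalIntegrable_of_Icc hs.1)
      (hgc.intervalIntegrable_of_Icc hs.1)
      (fun t ht => hbound t ⟨ht.1.le, lt_trans ht.2 hs.2⟩)
    refine h.trans (le_of_eq ?_)
    rw [intervalIntegral.integral_const_mul]
    congr 1
    rw [intervalIntegral.integral_add intervalIntegrable_const hintone,
      integral_one_div_tau_sub' hs.1 hs.2]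
    simp
  -- Step 2: Taylor remainder bound for v < τ
  have hstep2 : ∀ v ∈ Set.Ico (0:ℝ) τ, ‖ψ v - ψ 0 - v • ψ' 0‖ ≤ C * (v ^ 2 / 2 + v) := by
    intro v hv
    have hsub : Set.Icc (0:ℝ) v ⊆ Set.Ico 0 τ := fun x hx => ⟨hx.1, lt_of_le_of_lt hx.2 hv.2⟩
    have hsub' : Set.Icc (0:ℝ) v ⊆ Set.Icc 0 τ := hsub.trans Set.Ico_subset_Icc_self
    have hgc : ContinuousOn (fun s => C * (s + (Real.log τ - Real.log (τ - s)))) (Set.Icc 0 v) := by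
      intro x hx
      have hne : τ - x ≠ 0 := sub_ne_zero.2 (ne_of_gt (lt_of_le_of_lt hx.2 hv.2))
      exact (continuousAt_const.mul (continuousAt_id.add (continuousAt_const.sub
        ((Real.continuousAt_log hne).comp (by fun_prop))))).continuousWithinAt
    have hf : ContinuousOn (fun x => ψ x - x • ψ' 0) (Set.Icc 0 v) :=
      (hψc.mono hsub').sub ((continuous_id.smul continuous_const).continuousOn)
    have hd : ∀ t ∈ Set.Ioo (0:ℝ) v, HasDerivAt (fun x => ψ x - x • ψ' 0) (ψ' t - ψ' 0) t := by
      intro t ht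
      have h1 := hψd t ⟨ht.1, lt_trans ht.2 hv.2⟩
      have h2 : HasDerivAt (fun x : ℝ => x • ψ' 0) ((1:ℝ) • ψ' 0) t :=
        (hasDerivAt_id t).smul_const _
      have h3 := h1.sub h2
      rw [one_smul] at h3
      exact h3
    have hi : IntervalIntegrable (fun t => ψ' t - ψ' 0) volume 0 v :=
      ((hψ'c.mono hsub).sub continuousOn_const).intervalIntegrable_of_Icc hv.1
    have h := norm_sub_le_integral_bound' hv.1 hf hd hi (hgc.intervalIntegrable_of_Icc hv.1)
      (fun t ht => hstep1 t ⟨ht.1.le, lt_trans ht.2 hv.2⟩)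
    have heq : (fun x => ψ x - x • ψ' 0) v - (fun x => ψ x - x • ψ' 0) 0
        = ψ v - ψ 0 - v • ψ' 0 := by
      simp only []
      rw [zero_smul, sub_zero]
      abel
    rw [heq] at h
    have hlogint : IntervalIntegrable (fun s => Real.log (τ - s)) volume 0 v := by
      apply ContinuousOn.intervalIntegrable_of_Icc hv.1
      intro x hx
      have hne : τ - x ≠ 0 := sub_ne_zero.2 (ne_of_gt (lt_of_le_of_lt hx.2 hv.2))
      exact ((Real.continuousAt_log hne).comp (by fun_prop)).continuousWithinAt
    have hIg : (∫ t in (0:ℝ)..v, C * (t + (Real.log τ - Real.log (τ - t))))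
        = C * (v ^ 2 / 2 + v * Real.log τ
            - (-(τ - v) * Real.log (τ - v) - v + τ * Real.log τ)) := by
      rw [intervalIntegral.integral_const_mul]
      congr 1
      have h1 : IntervalIntegrable (fun s : ℝ => s) volume 0 v :=
        (continuous_id.intervalIntegrable _ _)
      rw [intervalIntegral.integral_add h1 (intervalIntegrable_const.sub hlogint),
        intervalIntegral.integral_sub intervalIntegrable_const hlogint,
        integral_id, intervalIntegral.integral_const, integral_log_tau_sub' hv.1 hv.2]
      simp
      ring
    rw [hIg] at h
    refine h.trans ?_
    apply mul_le_mul_of_nonneg_left _ hC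
    have hτv : 0 < τ - v := sub_pos.2 hv.2
    have hlog : Real.log (τ - v) ≤ Real.log τ :=
      Real.log_le_log hτv (by linarith [hv.1])
    nlinarith [mul_le_mul_of_nonneg_left hlog hτv.le]
  -- Step 3: uniform bound on [0, τ]
  have hM : ∀ v ∈ Set.Icc (0:ℝ) τ, ‖ψ v - ψ 0 - v • ψ' 0‖ ≤ 3/2 * C * τ := by
    have hb2' : ∀ w ∈ Set.Ico (0:ℝ) τ, ‖ψ w - ψ 0 - w • ψ' 0‖ ≤ 3/2 * C * τ := by
      intro w hw
      refine (hstep2 w hw).trans ?_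
      have h3 : w ^ 2 / 2 + w ≤ 3/2 * τ := by nlinarith [hw.1, hw.2.le, hτ1]
      nlinarith [mul_le_mul_of_nonneg_left h3 hC]
    intro v hv
    rcases eq_or_lt_of_le hv.2 with heq | hlt
    · subst heq
      have hcl : v ∈ closure (Set.Ico (0:ℝ) v) := by
        rw [closure_Ico (ne_of_lt hτ)]
        exact ⟨hτ0, le_refl v⟩
      have hnb : (nhdsWithin v (Set.Ico (0:ℝ) v)).NeBot :=
        mem_closure_iff_nhdsWithin_neBot.1 hcl
      have hcont : ContinuousWithinAt (fun x => ‖ψ x - ψ 0 - x • ψ' 0‖) (Set.Ico 0 v) v := by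
        apply ContinuousWithinAt.norm
        exact (((hψc v ⟨hτ0, le_refl v⟩).mono Set.Ico_subset_Icc_self).sub
          continuousWithinAt_const).sub
          ((continuous_id.smul continuous_const).continuousWithinAt)
      exact le_of_tendsto hcont (eventually_nhdsWithin_of_forall hb2')
    · exact hb2' v ⟨hv.1, hlt⟩
  -- Step 4: algebraic identity
  set R : ℝ → E := fun v => ψ v - ψ 0 - v • ψ' 0 with hRdef
  have hRc : ContinuousOn R (Set.Icc 0 τ) :=
    (hψc.sub continuousOn_const).sub ((continuous_id.smul continuous_const).continuousOn)
  have hRint : IntervalIntegrable R volume 0 τ := hRc.intervalIntegrable_of_Icc hτ0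
  have hlinint : IntervalIntegrable (fun s : ℝ => s • ψ' 0) volume 0 τ :=
    ((continuous_id.smul continuous_const).intervalIntegrable _ _)
  have h1 : ∫ s in (0:ℝ)..τ, ψ s
      = (∫ s in (0:ℝ)..τ, R s) + τ • ψ 0 + (τ ^ 2 / 2) • ψ' 0 := by
    have heq : ∀ s : ℝ, ψ s = R s + ψ 0 + s • ψ' 0 := by
      intro s
      show ψ s = (ψ s - ψ 0 - s • ψ' 0) + ψ 0 + s • ψ' 0
      abel
    calc ∫ s in (0:ℝ)..τ, ψ s = ∫ s in (0:ℝ)..τ, (R s + ψ 0 + s • ψ' 0) :=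
          intervalIntegral.integral_congr (fun s _ => heq s)
      _ = (∫ s in (0:ℝ)..τ, R s) + τ • ψ 0 + (τ ^ 2 / 2) • ψ' 0 := by
          rw [intervalIntegral.integral_add (hRint.add intervalIntegrable_const) hlinint,
            intervalIntegral.integral_add hRint intervalIntegrable_const,
            intervalIntegral.integral_const, intervalIntegral.integral_smul_const, integral_id]
          norm_num
  have h2 : ∑ k, b k • ψ (τ * c k) = (∑ k, b k • R (τ * c k)) + ψ 0 + (τ / 2) • ψ' 0 := by
    have heq : ∀ k, b k • ψ (τ * c k)
        = b k • R (τ * c k) + b k • ψ 0 + ((b k * c k) * τ) • ψ' 0 := by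
      intro k
      have hx : ψ (τ * c k) = R (τ * c k) + ψ 0 + (τ * c k) • ψ' 0 := by
        show ψ (τ * c k) = (ψ (τ * c k) - ψ 0 - (τ * c k) • ψ' 0) + ψ 0 + (τ * c k) • ψ' 0
        abel
      rw [hx, smul_add, smul_add, smul_smul,
        show b k * (τ * c k) = (b k * c k) * τ by ring]
    rw [Finset.sum_congr rfl (fun k _ => heq k), Finset.sum_add_distrib, Finset.sum_add_distrib,
      ← Finset.sum_smul, ← Finset.sum_smul, hb1, one_smul, ← Finset.sum_mul, hb2]
    congr 1
    · congr 1
      ring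
  have hkey : (∫ s in (0:ℝ)..τ, ψ s) - τ • ∑ k, b k • ψ (τ * c k)
      = (∫ s in (0:ℝ)..τ, R s) - τ • ∑ k, b k • R (τ * c k) := by
    rw [h1, h2, smul_add, smul_add, smul_smul,
      show τ * (τ / 2) = τ ^ 2 / 2 by ring]
    abel
  rw [hkey]
  -- Step 5: final bound
  have hA : ‖∫ s in (0:ℝ)..τ, R s‖ ≤ 3/2 * C * τ * τ := by
    have h := intervalIntegral.norm_integral_le_of_norm_le_const
      (C := 3/2 * C * τ) (f := R) (a := (0:ℝ)) (b := τ) ?_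
    · simpa [abs_of_nonneg hτ0] using h
    · intro x hx
      rw [uIoc_of_le hτ0] at hx
      exact hM x ⟨hx.1.le, hx.2⟩
  have hsum : ‖∑ k, b k • R (τ * c k)‖ ≤ (∑ k, |b k|) * (3/2 * C * τ) := by
    refine (norm_sum_le _ _).trans ?_
    rw [Finset.sum_mul]
    apply Finset.sum_le_sum
    intro k _
    rw [norm_smul, Real.norm_eq_abs]
    apply mul_le_mul_of_nonneg_left _ (abs_nonneg _)
    apply hM
    refine ⟨mul_nonneg hτ0 (hc k).1, ?_⟩
    calc τ * c k ≤ τ * 1 := mul_le_mul_of_nonneg_left (hc k).2 hτ0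
      _ = τ := mul_one τ
  have hB : ‖τ • ∑ k, b k • R (τ * c k)‖ ≤ τ * ((∑ k, |b k|) * (3/2 * C * τ)) := by
    rw [norm_smul, Real.norm_eq_abs, abs_of_nonneg hτ0]
    exact mul_le_mul_of_nonneg_left hsum hτ0
  refine (norm_sub_le _ _).trans ?_
  have hfin : 3/2 * C * τ * τ + τ * ((∑ k, |b k|) * (3/2 * C * τ))
      = 3/2 * C * (1 + ∑ k, |b k|) * τ ^ 2 := by ring
  linarith [hA, hB]
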